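/- arXiv:1004.3620 — 2 statements merged into one kernel-verified Lean document; each statement's English description precedes it below -/
import Mathlib

section
/- Let a, c, d, e be positive integers, b ≥ 0, g = c+e, h = cd - be > 0, and t ∈ ℂ. The set D(t) = { x ∈ ℂˣ : (-1)^g (c^c e^e / g^g)(x^a - t)^g x^h = 1 } has exactly a·g + h elements for all t outside a finite set of exceptional values. -/
open Polynomial


/-- For all `t` outside a finite exceptional set, the set
`D(t) = { x ≠ 0 : (-1)^g (c^c e^e / g^g)(x^a - t)^g x^h = 1 }`, with
`g = c + e` and `h = cd - be > 0`, has exactly `ag + h` elements. -/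
theorem stmt_7 (a b c d e h : ℕ) (ha : 0 < a) (hc : 0 < c) (hd : 0 < d)
    (he : 0 < e) (hh : 0 < h) (hcd : c * d = b * e + h) :
    ∃ S : Set ℂ, S.Finite ∧ ∀ t : ℂ, t ∉ S →
      {x : ℂ | x ≠ 0 ∧ (-1) ^ (c + e) * ((c : ℂ) ^ c * (e : ℂ) ^ e / ((c : ℂ) + e) ^ (c + e))
          * (x ^ a - t) ^ (c + e) * x ^ h = 1}.ncard = a * (c + e) + h := by
  set g := c + e with hg
  set n := a * g + h with hn
  have hg0 : 0 < g := by omega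
  have hn0 : 0 < n := by positivity
  set k : ℂ := (-1) ^ g * ((c : ℂ) ^ c * (e : ℂ) ^ e / ((c : ℂ) + e) ^ g) with hk
  have hce : ((c : ℂ) + e) ≠ 0 := by
    have : ((c + e : ℕ) : ℂ) ≠ 0 := Nat.cast_ne_zero.mpr (by omega)
    push_cast at this; exact this
  have hk0 : k ≠ 0 := by
    rw [hk]
    apply mul_ne_zero (pow_ne_zero _ (by norm_num))
    apply div_ne_zero
    · exact mul_ne_zero (pow_ne_zero _ (Nat.cast_ne_zero.mpr hc.ne'))
        (pow_ne_zero _ (Nat.cast_ne_zero.mpr he.ne'))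
    · exact pow_ne_zero _ hce
  have hnC : ((n : ℂ)) ≠ 0 := Nat.cast_ne_zero.mpr hn0.ne'
  have hhC : ((h : ℂ)) ≠ 0 := Nat.cast_ne_zero.mpr hh.ne'
  set C0 : ℂ := (n : ℂ) ^ n / ((h : ℂ) ^ h * k ^ a * (-(a * g : ℂ)) ^ (a * g)) with hC0
  refine ⟨insert 0 {t : ℂ | t ^ n = C0}, ?_, ?_⟩
  · apply Set.Finite.insert
    have : {t : ℂ | t ^ n = C0} ⊆ {x | IsRoot (X ^ n - C C0) x} := by
      intro t ht
      simp only [Set.mem_setOf_eq, IsRoot, eval_sub, eval_pow, eval_X, eval_C, sub_eq_zero]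
      exact ht
    exact (finite_setOf_isRoot (X_pow_sub_C_ne_zero hn0 C0)).subset this
  intro t ht
  have ht0 : t ≠ 0 := fun h0 => ht (Or.inl h0)
  have htC : t ^ n ≠ C0 := fun h0 => ht (Or.inr h0)
  set P : ℂ[X] := C k * (X ^ a - C t) ^ g * X ^ h - 1 with hP
  have hev : ∀ x : ℂ, P.eval x = k * (x ^ a - t) ^ g * x ^ h - 1 := by
    intro x; simp [hP]
  have hP0 : P ≠ 0 := by
    intro h0
    have := hev 0
    rw [h0] at this
    simp [zero_pow hh.ne'] at this
  have hdeg : P.natDegree = n := by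
    have h1 : P = (C k * (X ^ a - C t) ^ g * X ^ h) - C 1 := by
      rw [hP, map_one]
    rw [h1, natDegree_sub_C, natDegree_mul (by
        exact mul_ne_zero (C_ne_zero.mpr hk0) (pow_ne_zero _ (X_pow_sub_C_ne_zero ha t)))
      (pow_ne_zero _ X_ne_zero), natDegree_mul (C_ne_zero.mpr hk0)
      (pow_ne_zero _ (X_pow_sub_C_ne_zero ha t)), natDegree_C, natDegree_pow,
      natDegree_X_pow_sub_C, natDegree_X_pow]
    ring
  -- key: no common root of P and P'
  have hder : ∀ x : ℂ, P.derivative.eval x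
      = k * (((g : ℂ) * (x ^ a - t) ^ (g-1) * ((a:ℂ) * x ^ (a-1))) * x ^ h
           + (x ^ a - t) ^ g * ((h:ℂ) * x ^ (h-1))) := by
    intro x
    simp [hP, derivative_pow, derivative_X_pow]
    ring
  have hnocommon : ∀ x : ℂ, P.eval x = 0 → P.derivative.eval x ≠ 0 := by
    intro x hx hdx
    rw [hev] at hx
    rw [hder] at hdx
    have hx1 : k * (x ^ a - t) ^ g * x ^ h = 1 := by linear_combination hx
    have hxne : x ≠ 0 := by
      intro h0
      rw [h0, zero_pow hh.ne', mul_zero] at hx1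
      exact one_ne_zero hx1.symm
    have hat : x ^ a - t ≠ 0 := by
      intro h0
      rw [h0, zero_pow hg0.ne', mul_zero, zero_mul] at hx1
      exact one_ne_zero hx1.symm
    have hsum : ((g : ℂ) * (x ^ a - t) ^ (g-1) * ((a:ℂ) * x ^ (a-1))) * x ^ h
        + (x ^ a - t) ^ g * ((h:ℂ) * x ^ (h-1)) = 0 := by
      have := mul_eq_zero.mp hdx
      tauto
    -- multiply by x, factor
    have hfac : (x ^ a - t) ^ (g-1) * x ^ h * ((g:ℂ) * a * x ^ a + (h:ℂ) * (x ^ a - t)) = 0 := by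
      have e1 : x ^ (a-1) * x = x ^ a := by
        rw [← pow_succ]; congr 1; omega
      have e2 : x ^ (h-1) * x = x ^ h := by
        rw [← pow_succ]; congr 1; omega
      have e3 : (x ^ a - t) ^ (g-1) * (x ^ a - t) = (x ^ a - t) ^ g := by
        rw [← pow_succ]; congr 1; omega
      have := congrArg (· * x) hsum
      simp only [zero_mul] at this
      calc (x ^ a - t) ^ (g-1) * x ^ h * ((g:ℂ) * a * x ^ a + (h:ℂ) * (x ^ a - t))
          = (((g : ℂ) * (x ^ a - t) ^ (g-1) * ((a:ℂ) * x ^ (a-1))) * x ^ h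
           + (x ^ a - t) ^ g * ((h:ℂ) * x ^ (h-1))) * x := by
            rw [← e3]
            linear_combination ((g:ℂ) * (x^a - t)^(g-1) * x^h * a) * e1.symm
              + ((x^a-t)^(g-1) * (x^a - t) * (h:ℂ)) * e2.symm
        _ = 0 := this
    have hkey : (n : ℂ) * x ^ a = (h : ℂ) * t := by
      rcases mul_eq_zero.mp hfac with hf | hf
      · rcases mul_eq_zero.mp hf with hf | hf
        · exact absurd hf (pow_ne_zero _ hat)
        · exact absurd hf (pow_ne_zero _ hxne)
      · have : ((a * g + h : ℕ) : ℂ) * x ^ a = (h : ℂ) * t := by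
          push_cast
          linear_combination hf
        exact this
    have hcastn : (n : ℂ) = (a : ℂ) * g + h := by rw [hn]; push_cast; ring
    have hxat : (x ^ a - t) * n = -((a:ℂ) * g) * t := by
      linear_combination hkey - t * hcastn
    have hxakey : x ^ a * n = (h : ℂ) * t := by linear_combination hkey
    have hpow : k ^ a * (x ^ a - t) ^ (g * a) * x ^ (h * a) = 1 := by
      rw [pow_mul, pow_mul, ← mul_pow, ← mul_pow, hx1, one_pow]
    have h1 : (x ^ a - t) ^ (g*a) * (n:ℂ) ^ (g*a) = (-((a:ℂ)*g) * t) ^ (g*a) := by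
      rw [← mul_pow, hxat]
    have h2 : x ^ (h*a) * (n:ℂ) ^ h = ((h:ℂ)*t) ^ h := by
      rw [mul_comm h a, pow_mul, ← mul_pow, hxakey]
    have hmain : (n:ℂ)^n = k^a * (-((a:ℂ)*g))^(g*a) * t^(g*a) * ((h:ℂ)^h * t^h) := by
      calc (n:ℂ)^n = (n:ℂ)^(g*a) * (n:ℂ)^h := by rw [← pow_add]; congr 1; rw [hn]; ring
        _ = (k^a * (x^a-t)^(g*a) * x^(h*a)) * ((n:ℂ)^(g*a) * (n:ℂ)^h) := by
            rw [hpow, one_mul]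
        _ = k^a * ((x^a-t)^(g*a) * (n:ℂ)^(g*a)) * (x^(h*a) * (n:ℂ)^h) := by ring
        _ = k^a * (-((a:ℂ)*g) * t)^(g*a) * (((h:ℂ)*t)^h) := by rw [h1, h2]
        _ = k^a * (-((a:ℂ)*g))^(g*a) * t^(g*a) * ((h:ℂ)^h * t^h) := by
            rw [mul_pow, mul_pow]; ring
    apply htC
    have hag0 : (-((a:ℂ) * g)) ≠ 0 := by
      simp only [neg_ne_zero]
      exact mul_ne_zero (Nat.cast_ne_zero.mpr ha.ne') (Nat.cast_ne_zero.mpr hg0.ne')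
    rw [hC0, eq_div_iff (mul_ne_zero (mul_ne_zero (pow_ne_zero _ hhC) (pow_ne_zero _ hk0))
      (pow_ne_zero _ hag0))]
    rw [show (-((a:ℂ)*g))^(a*g) = (-((a:ℂ)*g))^(g*a) from by rw [mul_comm a g],
      show t ^ n = t^(g*a) * t^h from by rw [← pow_add]; congr 1; rw [hn]; ring, hmain]
    ring
  -- separability
  have hsep : P.Separable := by
    rw [Polynomial.separable_def]
    rw [← EuclideanDomain.gcd_isUnit_iff]
    by_contra hns
    have hgcd0 : EuclideanDomain.gcd P P.derivative ≠ 0 := by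
      intro h0
      exact hP0 (EuclideanDomain.gcd_eq_zero_iff.mp h0).1
    have hdegne : (EuclideanDomain.gcd P P.derivative).degree ≠ 0 := by
      intro h0
      exact hns (isUnit_iff_degree_eq_zero.mpr h0)
    obtain ⟨z, hz⟩ := IsAlgClosed.exists_root _ hdegne
    have hz1 : P.eval z = 0 := hz.dvd (EuclideanDomain.gcd_dvd_left _ _)
    have hz2 : P.derivative.eval z = 0 := hz.dvd (EuclideanDomain.gcd_dvd_right _ _)
    exact hnocommon z hz1 hz2
  -- set equality and count
  have hset : {x : ℂ | x ≠ 0 ∧ (-1) ^ (c + e) * ((c : ℂ) ^ c * (e : ℂ) ^ e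
        / ((c : ℂ) + e) ^ (c + e)) * (x ^ a - t) ^ (c + e) * x ^ h = 1} = P.rootSet ℂ := by
    ext x
    simp only [Set.mem_setOf_eq, mem_rootSet, aeval_def, eval₂_eq_eval_map, Polynomial.map_id]
    rw [show (P.map (algebraMap ℂ ℂ)).eval x = P.eval x by simp, hev x]
    constructor
    · rintro ⟨hx0, hx1⟩
      exact ⟨hP0, by rw [sub_eq_zero]; exact hx1⟩
    · rintro ⟨-, hx⟩
      rw [sub_eq_zero] at hx
      refine ⟨?_, hx⟩
      intro h0
      rw [h0, zero_pow hh.ne', mul_zero] at hx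
      exact one_ne_zero hx.symm
  rw [hset]
  have := card_rootSet_eq_natDegree (K := ℂ) hsep (IsAlgClosed.splits _)
  rw [hdeg] at this
  rw [← this, Set.ncard_eq_toFinset_card', Set.toFinset_card]
end

section
/- With a, g, h positive integers, the polynomial P_t(x) = (-1)^g c^c e^e (x^a - t)^g x^h - g^g (g = c+e, h = cd - be) has a repeated root x only if x^a = (h/(ag+h)) t and t^{(ag+h)/a} equals (1/(c^c e^e)) (1 + h/a)^g (1 + ag/h)^{h/a} up to a root of unity; in particular, if x is a repeated root of P_t then a x^a (g + h) relation holds: x^a = h t/(ag + h). -/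
/-- A repeated root of `P_t(x) = (-1)^g c^c e^e (x^a - t)^g x^h - g^g`
(i.e. a common zero of `P_t` and its derivative) with `x ≠ 0` and `x^a ≠ t`
satisfies `x^a = h t / (ag + h)`, where `g = c+e`, `h = cd - be > 0`. -/
theorem stmt_8 (a b c d e h : ℕ) (ha : 0 < a) (hc : 0 < c) (hd : 0 < d)
    (he : 0 < e) (hh : 0 < h) (hcd : c * d = b * e + h) (t x : ℂ)
    (hx : x ≠ 0) (hxt : x ^ a ≠ t)
    (hP : (-1) ^ (c + e) * (c : ℂ) ^ c * (e : ℂ) ^ e * (x ^ a - t) ^ (c + e) * x ^ h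
            - ((c : ℂ) + e) ^ (c + e) = 0)
    (hP' : deriv (fun z : ℂ =>
            (-1) ^ (c + e) * (c : ℂ) ^ c * (e : ℂ) ^ e * (z ^ a - t) ^ (c + e) * z ^ h
              - ((c : ℂ) + e) ^ (c + e)) x = 0) :
    x ^ a = (h : ℂ) * t / ((a : ℂ) * ((c : ℂ) + e) + h) := by
  set C : ℂ := (-1) ^ (c + e) * (c : ℂ) ^ c * (e : ℂ) ^ e with hC
  have hS : x ^ a - t ≠ 0 := sub_ne_zero.mpr hxt
  have hCne : C ≠ 0 := by
    apply mul_ne_zero (mul_ne_zero (pow_ne_zero _ (by norm_num)) _) _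
    · exact pow_ne_zero _ (Nat.cast_ne_zero.mpr hc.ne')
    · exact pow_ne_zero _ (Nat.cast_ne_zero.mpr he.ne')
  -- compute the derivative
  have h1 : HasDerivAt (fun z : ℂ => z ^ a - t) ((a : ℂ) * x ^ (a - 1)) x :=
    (hasDerivAt_pow a x).sub_const t
  have h2 : HasDerivAt (fun z : ℂ => (z ^ a - t) ^ (c + e))
      ((c + e : ℕ) * (x ^ a - t) ^ (c + e - 1) * ((a : ℂ) * x ^ (a - 1))) x := h1.pow _
  have h3 : HasDerivAt (fun z : ℂ => z ^ h) ((h : ℂ) * x ^ (h - 1)) x := hasDerivAt_pow h x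
  have h4 : HasDerivAt (fun z : ℂ =>
      (-1) ^ (c + e) * (c : ℂ) ^ c * (e : ℂ) ^ e * (z ^ a - t) ^ (c + e) * z ^ h
        - ((c : ℂ) + e) ^ (c + e))
      (C * ((c + e : ℕ) * (x ^ a - t) ^ (c + e - 1) * ((a : ℂ) * x ^ (a - 1))) * x ^ h
        + C * (x ^ a - t) ^ (c + e) * ((h : ℂ) * x ^ (h - 1))) x := by
    have := ((h2.const_mul C).mul h3).sub_const (((c : ℂ) + e) ^ (c + e))
    exact this.congr_of_eventuallyEq (Filter.Eventually.of_forall fun z => by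
      simp only [Pi.mul_apply, hC])
  rw [h4.deriv] at hP'
  -- abbreviations for the subtracted exponents
  have ea : x ^ (a - 1) * x = x ^ a := by
    rw [← pow_succ]; congr 1; omega
  have eh : x ^ (h - 1) * x = x ^ h := by
    rw [← pow_succ]; congr 1; omega
  have eg : (x ^ a - t) ^ (c + e - 1) * (x ^ a - t) = (x ^ a - t) ^ (c + e) := by
    rw [← pow_succ]; congr 1; omega
  -- multiply hP' by x and factor
  push_cast at hP'
  have key : C * (x ^ a - t) ^ (c + e - 1) * x ^ h *
      (((c : ℂ) + e) * a * x ^ a + (h : ℂ) * (x ^ a - t)) = 0 := by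
    linear_combination x * hP'
      - C * ((c : ℂ) + e) * a * (x ^ a - t) ^ (c + e - 1) * x ^ h * ea
      + C * (h : ℂ) * x ^ h * eg
      - C * (h : ℂ) * (x ^ a - t) ^ (c + e) * eh
  have hfac : ((c : ℂ) + e) * a * x ^ a + (h : ℂ) * (x ^ a - t) = 0 := by
    rcases mul_eq_zero.mp key with hk | hk
    · exfalso
      rcases mul_eq_zero.mp hk with hk | hk
      · rcases mul_eq_zero.mp hk with hk | hk
        · exact hCne hk
        · exact pow_ne_zero _ hS hk
      · exact pow_ne_zero _ hx hk
    · exact hk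
  have hden : (a : ℂ) * ((c : ℂ) + e) + h ≠ 0 := by
    have : ((a * (c + e) + h : ℕ) : ℂ) ≠ 0 :=
      Nat.cast_ne_zero.mpr (by positivity)
    push_cast at this
    convert this using 2
  rw [eq_div_iff hden]
  linear_combination hfac
end
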